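/- Suppose A : X → X is linear, skew, and β-Lipschitz with β > 0. Then ⟨x, R_A x⟩ ≥ (2/(1+β²) − 1)‖x‖² for all x, where R_A = 2(Id+A)⁻¹ − Id. Equivalently, ⟨u + Au, u − Au⟩ ≥ (2/(1+β²) − 1)‖u + Au‖² for all u ∈ X. -/

import Mathlib

open InnerProductSpace

theorem stmt_18 {X : Type*} [NormedAddCommGroup X] [InnerProductSpace ℝ X]
    (A : X →L[ℝ] X) (β : ℝ) (hβ : 0 < β)
    (hskew : ∀ u : X, ⟪u, A u⟫_ℝ = 0)
    (hlip : ∀ u : X, ‖A u‖ ≤ β * ‖u‖) :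
    ∀ u : X, ⟪u + A u, u - A u⟫_ℝ ≥ (2 / (1 + β ^ 2) - 1) * ‖u + A u‖ ^ 2 := by
  intro u
  have hsym : ⟪A u, u⟫_ℝ = 0 := by rw [real_inner_comm]; exact hskew u
  have h1 : ⟪u + A u, u - A u⟫_ℝ = ‖u‖ ^ 2 - ‖A u‖ ^ 2 := by
    simp [inner_add_left, inner_sub_right, hskew u, hsym, real_inner_self_eq_norm_sq]
  have h2 : ‖u + A u‖ ^ 2 = ‖u‖ ^ 2 + ‖A u‖ ^ 2 := by
    rw [← real_inner_self_eq_norm_sq]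
    rw [inner_add_left, inner_add_right, inner_add_right, hskew u, hsym, real_inner_self_eq_norm_sq, real_inner_self_eq_norm_sq]
    ring
  rw [h1, h2]
  have hb : ‖A u‖ ^ 2 ≤ β ^ 2 * ‖u‖ ^ 2 := by
    have := hlip u
    nlinarith [norm_nonneg (A u), norm_nonneg u]
  have hpos : (0:ℝ) < 1 + β ^ 2 := by positivity
  rw [ge_iff_le, div_sub' (ne_of_gt hpos), div_mul_eq_mul_div, div_le_iff₀ hpos]
  nlinarith [norm_nonneg u, norm_nonneg (A u), sq_nonneg β]
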